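/- Let b(n) := ∑_{I nonzero ideal of 𝓞_K with N(I) = n} g(I)². For every integer k ≥ 1: (i) b(7^k) = (−7)^k; (ii) if p is a prime with ε(p) = 1 and π ∈ 𝓞_K satisfies p = π·π̄ (where π̄ is the image of π under the nontrivial ℚ-automorphism of K), then b(p^k) = ∑_{t=0}^{k} π^{2t}·π̄^{2(k−t)}; (iii) if q is a prime with ε(q) = −1 then b(q^k) = q^k if k is even and b(q^k) = 0 if k is odd. -/

import Mathlib

open Polynomial NumberField

instance : Fact (Nat.Prime 7) := ⟨by norm_num⟩

variable (K : Type) [Field K] [NumberField K]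
  [Polynomial.IsSplittingField ℚ K (X ^ 2 + C 7)]

/-- `b(n) := ∑_{I nonzero ideal of 𝓞_K, N(I) = n} g(I)²`, where `g` is a choice of
generator for each nonzero ideal of the principal ideal domain `𝓞_K` (the square of a
generator is independent of this choice since the only units are `±1`). -/
noncomputable def b (g : Ideal (RingOfIntegers K) → RingOfIntegers K) (n : ℕ) :
    RingOfIntegers K :=
  ∑ᶠ I ∈ {I : Ideal (RingOfIntegers K) | Ideal.absNorm I = n}, (g I) ^ 2

namespace BAux

variable {K}

lemma exists_rt : ∃ r : K, r ^ 2 = -7 := by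
  have hs : Splits ((X ^ 2 + C 7 : ℚ[X]).map (algebraMap ℚ K)) := IsSplittingField.splits K _
  have hdeg : (X ^ 2 + C 7 : ℚ[X]).degree = 2 := by
    compute_degree!
  obtain ⟨r, hr⟩ := hs.exists_eval_eq_zero (by rw [degree_map, hdeg]; norm_num)
  refine ⟨r, ?_⟩
  have := hr
  rw [eval_map, eval₂_add, eval₂_pow, eval₂_X, eval₂_C] at this
  have h7 : algebraMap ℚ K 7 = (7 : K) := by norm_num
  rw [h7] at this
  linear_combination this

noncomputable def rt : K := Classical.choose (exists_rt (K := K))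

lemma rt_sq : (rt : K) ^ 2 = -7 := Classical.choose_spec (exists_rt (K := K))

lemma rt_not_rat (a : ℚ) : algebraMap ℚ K a ≠ rt := by
  intro h
  have : (algebraMap ℚ K) (a ^ 2) = algebraMap ℚ K (-7) := by
    rw [map_pow, h, rt_sq]; norm_num
  have ha : a ^ 2 = -7 := (algebraMap ℚ K).injective this
  nlinarith [sq_nonneg a]

lemma span_pair_top : Submodule.span ℚ ({1, rt} : Set K) = ⊤ := by
  have hadj : Algebra.adjoin ℚ ((X ^ 2 + C 7 : ℚ[X]).rootSet K) = ⊤ :=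
    IsSplittingField.adjoin_rootSet _ _
  have hroots : ((X ^ 2 + C 7 : ℚ[X]).rootSet K) ⊆ {rt, -rt} := by
    intro x hx
    have hx2 : x ^ 2 = -7 := by
      have := (mem_rootSet.mp hx).2
      rw [show (X ^ 2 + C 7 : ℚ[X]) = X^2 + C 7 from rfl] at this
      simp [aeval_def, eval₂_add, eval₂_pow] at this
      linear_combination this
    have : (x - rt) * (x + rt) = 0 := by
      have h2 := rt_sq (K := K)
      ring_nf
      linear_combination hx2 - h2
    rcases mul_eq_zero.mp this with h | h
    · left; exact sub_eq_zero.mp h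
    · right; exact eq_neg_of_add_eq_zero_left h
  have htop : Algebra.adjoin ℚ ({rt, -rt} : Set K) = ⊤ :=
    top_le_iff.mp (hadj ▸ Algebra.adjoin_mono hroots)
  rw [eq_top_iff]
  rintro x -
  have hx : x ∈ Algebra.adjoin ℚ ({rt, -rt} : Set K) := htop ▸ Algebra.mem_top
  induction hx using Algebra.adjoin_induction with
  | mem y hy =>
      rcases hy with h | h
      · subst h; exact Submodule.subset_span (by simp)
      · simp only [Set.mem_singleton_iff] at h; subst h
        exact neg_mem (Submodule.subset_span (by simp))
  | algebraMap a =>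
      have : algebraMap ℚ K a = a • (1 : K) := by rw [Algebra.smul_def, mul_one]
      rw [this]
      exact Submodule.smul_mem _ _ (Submodule.subset_span (by simp))
  | add y z _ _ hy hz => exact add_mem hy hz
  | mul y z _ _ hy hz =>
      obtain ⟨c, d, hcd⟩ := Submodule.mem_span_pair.mp hy
      obtain ⟨e, f, hef⟩ := Submodule.mem_span_pair.mp hz
      refine Submodule.mem_span_pair.mpr ⟨c * e - 7 * (d * f), c * f + d * e, ?_⟩
      have h2 := rt_sq (K := K)
      rw [← hcd, ← hef]
      simp only [Algebra.smul_def, map_mul, map_sub, map_add, map_ofNat, mul_one]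
      linear_combination (-(algebraMap ℚ K d * algebraMap ℚ K f)) * h2

lemma exists_coords (x : K) :
    ∃ a b : ℚ, x = algebraMap ℚ K a + algebraMap ℚ K b * rt (K := K) := by
  have hx : x ∈ Submodule.span ℚ ({1, rt} : Set K) := (span_pair_top (K := K)) ▸ Submodule.mem_top
  obtain ⟨a, b, hab⟩ := Submodule.mem_span_pair.mp hx
  exact ⟨a, b, by rw [← hab]; simp [Algebra.smul_def]⟩

end BAux

namespace BAux
variable {K : Type} [Field K] [NumberField K] [Polynomial.IsSplittingField ℚ K (X ^ 2 + C 7)]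

lemma rt_ne_zero : (rt : K) ≠ 0 := by
  intro h
  have := rt_sq (K := K)
  rw [h] at this
  norm_num at this

lemma finrank_eq_two : Module.finrank ℚ K = 2 := by
  have hle : Module.finrank ℚ K ≤ 2 := by
    classical
    have h1 : Module.finrank ℚ K =
        Module.finrank ℚ (Submodule.span ℚ ({1, rt} : Set K)) := by
      rw [span_pair_top, finrank_top]
    have h2 : ({1, rt} : Set K) = (({1, rt} : Finset K) : Set K) := by simp
    rw [h1, h2]
    refine le_trans (finrank_span_finset_le_card _) ?_
    exact le_trans (Finset.card_insert_le _ _) (by simp)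
  have hli : LinearIndependent ℚ ![(1 : K), rt] := by
    rw [linearIndependent_fin2]
    refine ⟨by simpa using rt_ne_zero (K := K), fun a ha => ?_⟩
    simp only [Matrix.cons_val_one, Matrix.head_cons, Matrix.cons_val_zero] at ha
    have ha0 : a ≠ 0 := by rintro rfl; rw [zero_smul] at ha; exact one_ne_zero ha.symm
    apply rt_not_rat (K := K) a⁻¹
    rw [Algebra.smul_def] at ha
    rw [map_inv₀]
    exact inv_eq_of_mul_eq_one_right ha
  have hge : 2 ≤ Module.finrank ℚ K := by
    simpa using hli.fintype_card_le_finrank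
  omega

instance : IsGalois ℚ K := { to_normal := Normal.of_isSplittingField (X ^ 2 + C 7) }

lemma sigma_rt {σ : K ≃ₐ[ℚ] K} (hσ : σ ≠ AlgEquiv.refl) : σ rt = -rt := by
  have h2 : (σ rt) ^ 2 = -7 := by
    rw [← map_pow, rt_sq]
    have : σ (algebraMap ℚ K (-7)) = algebraMap ℚ K (-7) := σ.commutes (-7)
    simpa using this
  have : (σ rt - rt) * (σ rt + rt) = 0 := by
    have := rt_sq (K := K)
    ring_nf
    linear_combination h2 - this
  rcases mul_eq_zero.mp this with h | h
  · exfalso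
    apply hσ
    have hfix : σ rt = rt := sub_eq_zero.mp h
    ext x
    obtain ⟨a, b, rfl⟩ := exists_coords (K := K) x
    simp [map_add, map_mul, hfix, AlgEquiv.commutes]
  · exact eq_neg_of_add_eq_zero_left h

lemma sigma_exists : ∃ σ : K ≃ₐ[ℚ] K, σ ≠ AlgEquiv.refl := by
  have hcard : Fintype.card (K ≃ₐ[ℚ] K) = 2 := by
    rw [← Nat.card_eq_fintype_card, IsGalois.card_aut_eq_finrank, finrank_eq_two]
  by_contra h
  push_neg at h
  have : ∀ a b : K ≃ₐ[ℚ] K, a = b := fun a b => (h a).trans (h b).symm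
  have h1 : Fintype.card (K ≃ₐ[ℚ] K) ≤ 1 := Fintype.card_le_one_iff.mpr this
  omega

lemma norm_eq_mul_sigma {σ : K ≃ₐ[ℚ] K} (hσ : σ ≠ AlgEquiv.refl) (x : K) :
    algebraMap ℚ K (Algebra.norm ℚ x) = x * σ x := by
  classical
  have hcard : Fintype.card (K ≃ₐ[ℚ] K) = 2 := by
    rw [← Nat.card_eq_fintype_card, IsGalois.card_aut_eq_finrank, finrank_eq_two]
  have huniv : (Finset.univ : Finset (K ≃ₐ[ℚ] K)) = {AlgEquiv.refl, σ} := by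
    symm
    apply Finset.eq_univ_of_card
    rw [Finset.card_insert_of_notMem (by simp [Ne.symm hσ]), Finset.card_singleton, hcard]
  rw [Algebra.norm_eq_prod_automorphisms, huniv, Finset.prod_pair (Ne.symm hσ)]
  rfl

lemma norm_coords {σ : K ≃ₐ[ℚ] K} (hσ : σ ≠ AlgEquiv.refl) (a b : ℚ) :
    Algebra.norm ℚ (algebraMap ℚ K a + algebraMap ℚ K b * rt) = a ^ 2 + 7 * b ^ 2 := by
  apply (algebraMap ℚ K).injective
  rw [norm_eq_mul_sigma hσ]
  rw [map_add, map_mul, sigma_rt hσ]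
  simp only [AlgEquiv.commutes]
  have h2 := rt_sq (K := K)
  push_cast [map_add, map_mul, map_pow, map_ofNat]
  linear_combination (-(algebraMap ℚ K b)^2) * h2

lemma norm_coords' (a b : ℚ) :
    Algebra.norm ℚ (algebraMap ℚ K a + algebraMap ℚ K b * rt) = a ^ 2 + 7 * b ^ 2 := by
  obtain ⟨σ, hσ⟩ := sigma_exists (K := K)
  exact norm_coords hσ a b

end BAux

namespace BAux
variable {K : Type} [Field K] [NumberField K] [Polynomial.IsSplittingField ℚ K (X ^ 2 + C 7)]

lemma rt_integral : IsIntegral ℤ (rt : K) := by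
  refine ⟨X ^ 2 + C 7, ?_, ?_⟩
  · apply Polynomial.monic_X_pow_add_C _ (by norm_num)
  · rw [eval₂_add, eval₂_pow, eval₂_X, eval₂_C, rt_sq]
    norm_num

noncomputable def th : 𝓞 K := ⟨rt, rt_integral⟩

lemma th_coe : ((th : 𝓞 K) : K) = rt := rfl

lemma th_sq : (th : 𝓞 K) ^ 2 = -7 := by
  ext
  push_cast [th_coe]
  rw [rt_sq]
  norm_cast

lemma th_ne_zero : (th : 𝓞 K) ≠ 0 := by
  intro h
  apply rt_ne_zero (K := K)
  rw [← th_coe, h]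
  simp

lemma norm_int_coords (x : 𝓞 K) (a b : ℚ) (h : (x : K) = algebraMap ℚ K a + algebraMap ℚ K b * rt) :
    ((Algebra.norm ℤ x : ℤ) : ℚ) = a ^ 2 + 7 * b ^ 2 := by
  rw [Algebra.coe_norm_int, h, norm_coords']

lemma half_coords (x : 𝓞 K) :
    ∃ s t : ℤ, (x : K) = algebraMap ℚ K ((s : ℚ)/2) + algebraMap ℚ K ((t : ℚ)/2) * rt ∧
      4 * Algebra.norm ℤ x = s ^ 2 + 7 * t ^ 2 := by
  obtain ⟨a, b, hab⟩ := exists_coords (K := K) (x : K)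
  have hn1 := norm_int_coords x a b hab
  have hab2 : ((x + 1 : 𝓞 K) : K) = algebraMap ℚ K (a + 1) + algebraMap ℚ K b * rt := by
    have h' : ((x + 1 : 𝓞 K) : K) = (x : K) + 1 := by push_cast; ring
    rw [h', hab, map_add, map_one]
    ring
  have hn2 := norm_int_coords (x + 1) (a + 1) b hab2
  have hab3 : ((x + th : 𝓞 K) : K) = algebraMap ℚ K a + algebraMap ℚ K (b + 1) * rt := by
    have h' : ((x + th : 𝓞 K) : K) = (x : K) + ((th : 𝓞 K) : K) := by push_cast; ring
    rw [h', hab, th_coe, map_add, map_one]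
    ring
  have hn3 := norm_int_coords (x + th) a (b + 1) hab3
  set n1 := Algebra.norm ℤ x with hn1d
  set n2 := Algebra.norm ℤ (x + 1)
  set n3 := Algebra.norm ℤ (x + th)
  set u : ℤ := n2 - n1 - 1 with hud
  set v : ℤ := n3 - n1 - 7 with hvd
  have hu : ((u : ℤ) : ℚ) = 2 * a := by
    rw [hud]; push_cast; rw [hn1, hn2]; ring
  have hv : ((v : ℤ) : ℚ) = 14 * b := by
    rw [hvd]; push_cast; rw [hn1, hn3]; ring
  have hm : ((7 * (4 * n1 - u ^ 2) : ℤ) : ℚ) = ((v ^ 2 : ℤ) : ℚ) := by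
    push_cast
    rw [hn1, hu, hv]
    ring
  have hZ : v ^ 2 = 7 * (4 * n1 - u ^ 2) := by exact_mod_cast hm.symm
  have hp7 : Prime (7 : ℤ) := by norm_num
  have h7v : (7 : ℤ) ∣ v := hp7.dvd_of_dvd_pow (n := 2) ⟨_, hZ⟩
  obtain ⟨w, hw⟩ := h7v
  have ha' : a = (u : ℚ) / 2 := by rw [hu]; ring
  have hb' : b = (w : ℚ) / 2 := by
    have : ((v : ℤ) : ℚ) = 7 * (w : ℚ) := by rw [hw]; push_cast; ring
    rw [this] at hv
    linarith
  refine ⟨u, w, ?_, ?_⟩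
  · rw [hab, ha', hb']
  · have : ((4 * n1 : ℤ) : ℚ) = ((u ^ 2 + 7 * w ^ 2 : ℤ) : ℚ) := by
      push_cast
      rw [hn1, ha', hb']
      ring
    exact_mod_cast this

lemma unit_pm (e : (𝓞 K)ˣ) : (e : 𝓞 K) = 1 ∨ (e : 𝓞 K) = -1 := by
  have hn : IsUnit (Algebra.norm ℤ (e : 𝓞 K)) := (IsUnit.map (Algebra.norm ℤ) e.isUnit)
  obtain ⟨s, t, hco, hnorm⟩ := half_coords (e : 𝓞 K)
  rcases Int.isUnit_iff.mp hn with h1 | h1 <;> rw [h1] at hnorm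
  · have ht : t = 0 := by nlinarith [sq_nonneg s, sq_nonneg t]
    have hs : s = 2 ∨ s = -2 := by
      have h4 : (s - 2) * (s + 2) = 0 := by nlinarith
      rcases mul_eq_zero.mp h4 with h | h
      · left; linarith
      · right; linarith
    rw [ht] at hco
    rcases hs with rfl | rfl
    · left; ext; rw [hco]; push_cast; norm_num
    · right; ext; rw [hco]; push_cast; norm_num
  · exfalso
    nlinarith [sq_nonneg s, sq_nonneg t]

lemma unit_sq (e : (𝓞 K)ˣ) : (e : 𝓞 K) ^ 2 = 1 := by
  rcases unit_pm e with h | h <;> rw [h] <;> ring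

lemma gen_sq_eq {x y : 𝓞 K} (h : Ideal.span {x} = Ideal.span {y}) : x ^ 2 = y ^ 2 := by
  obtain ⟨e, he⟩ := Ideal.span_singleton_eq_span_singleton.mp h
  rw [← he, mul_pow, unit_sq, mul_one]

end BAux

namespace BAux
variable {K : Type} [Field K] [NumberField K] [Polynomial.IsSplittingField ℚ K (X ^ 2 + C 7)]

lemma coords_unique {a b a' b' : ℚ}
    (h : algebraMap ℚ K a + algebraMap ℚ K b * rt = algebraMap ℚ K a' + algebraMap ℚ K b' * rt) :
    a = a' ∧ b = b' := by
  by_cases hb : b = b'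
  · subst hb
    refine ⟨(algebraMap ℚ K).injective ?_, rfl⟩
    exact add_right_cancel h
  · exfalso
    apply rt_not_rat (K := K) ((a - a') / (b' - b))
    have hbb : (algebraMap ℚ K) (b' - b) ≠ 0 := by
      simp only [map_sub, ne_eq, sub_eq_zero]
      exact fun hcon => hb ((algebraMap ℚ K).injective hcon).symm
    rw [map_div₀]
    rw [div_eq_iff hbb]
    rw [map_sub, map_sub]
    linear_combination h
  
lemma norm_nonneg (x : 𝓞 K) : 0 ≤ Algebra.norm ℤ x := by
  obtain ⟨a, b, hab⟩ := exists_coords (K := K) (x : K)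
  have := norm_int_coords x a b hab
  have h0 : (0 : ℚ) ≤ ((Algebra.norm ℤ x : ℤ) : ℚ) := by rw [this]; positivity
  exact_mod_cast h0

lemma absNorm_span_eq_norm (x : 𝓞 K) :
    (Ideal.absNorm (Ideal.span {x}) : ℤ) = Algebra.norm ℤ x := by
  rw [Ideal.absNorm_span_singleton, Int.natAbs_of_nonneg (norm_nonneg x)]

lemma absNorm_span_th : Ideal.absNorm (Ideal.span {th (K := K)}) = 7 := by
  have h : ((Algebra.norm ℤ (th (K := K)) : ℤ) : ℚ) = 7 := by
    have := norm_int_coords (th (K := K)) 0 1 (by rw [th_coe]; simp)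
    rw [this]; norm_num
  have h' : Algebra.norm ℤ (th (K := K)) = 7 := by exact_mod_cast h
  have h2 := absNorm_span_eq_norm (th (K := K))
  rw [h'] at h2
  exact_mod_cast h2

end BAux

namespace BAux
variable {K : Type} [Field K] [NumberField K] [Polynomial.IsSplittingField ℚ K (X ^ 2 + C 7)]

lemma absNorm_mul (I J : Ideal (𝓞 K)) :
    Ideal.absNorm (I * J) = Ideal.absNorm I * Ideal.absNorm J :=
  MonoidWithZeroHom.map_mul Ideal.absNorm I J

lemma absNorm_pow (I : Ideal (𝓞 K)) (n : ℕ) :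
    Ideal.absNorm (I ^ n) = Ideal.absNorm I ^ n := by
  induction n with
  | zero => simp
  | succ n ih => rw [pow_succ, pow_succ, absNorm_mul, ih]

lemma eq_of_le_of_absNorm_eq {I Q : Ideal (𝓞 K)} (h : I ≤ Q)
    (hn : Ideal.absNorm Q = Ideal.absNorm I) (h0 : Ideal.absNorm I ≠ 0) : Q = I := by
  obtain ⟨J, hJ⟩ := Ideal.dvd_iff_le.mpr h
  have hIm : Ideal.absNorm I = Ideal.absNorm Q * Ideal.absNorm J := by rw [hJ, absNorm_mul]
  rw [hn] at hIm
  have hJ1 : Ideal.absNorm J = 1 :=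
    Nat.eq_of_mul_eq_mul_left (Nat.pos_of_ne_zero h0) (by rw [← hIm, mul_one])
  rw [hJ, Ideal.absNorm_eq_one_iff.mp hJ1, Ideal.mul_top]

lemma prime_eq_span {Q : Ideal (𝓞 K)} (hQ : Q.IsPrime) {x : 𝓞 K} (hx : x ∈ Q)
    (hn : (Ideal.absNorm (Ideal.span {x})).Prime) : Q = Ideal.span {x} := by
  have hle : Ideal.span {x} ≤ Q := Ideal.span_le.mpr (by simpa using hx)
  have hdvd : Ideal.absNorm Q ∣ Ideal.absNorm (Ideal.span {x}) :=
    Ideal.absNorm_dvd_absNorm_of_le hle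
  rcases (Nat.Prime.eq_one_or_self_of_dvd hn _ hdvd) with h1 | h1
  · exact absurd (Ideal.absNorm_eq_one_iff.mp h1) hQ.ne_top
  · exact eq_of_le_of_absNorm_eq hle h1 hn.ne_zero

lemma class_pow {P : Ideal (𝓞 K)} {p e : ℕ} (hp : p.Prime) (hPn : Ideal.absNorm P = p ^ e)
    (he : e ≠ 0) (hcover : ∀ Q : Ideal (𝓞 K), Q.IsPrime → ((p : 𝓞 K) ∈ Q) → Q = P) :
    ∀ k, ∀ I : Ideal (𝓞 K), Ideal.absNorm I = p ^ k → ∃ m, k = e * m ∧ I = P ^ m := by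
  intro k
  induction k using Nat.strong_induction_on with
  | _ k ih =>
    intro I hI
    rcases Nat.eq_zero_or_pos k with rfl | hk
    · refine ⟨0, by simp, ?_⟩
      rw [pow_zero, Ideal.one_eq_top]
      exact Ideal.absNorm_eq_one_iff.mp (by simpa using hI)
    · have hItop : I ≠ ⊤ := by
        intro h
        rw [h, Ideal.absNorm_top] at hI
        have hgt : 1 < p ^ k := Nat.one_lt_pow (by omega) hp.one_lt
        omega
      obtain ⟨Q, hQmax, hIQ⟩ := Ideal.exists_le_maximal I hItop
      have hQP : Q = P := by
        apply hcover Q hQmax.isPrime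
        have hmem : ((p ^ k : ℕ) : 𝓞 K) ∈ Q := hIQ (hI ▸ Ideal.absNorm_mem I)
        have hpow : ((p : 𝓞 K)) ^ k ∈ Q := by push_cast at hmem; exact hmem
        exact hQmax.isPrime.mem_of_pow_mem _ hpow
      subst hQP
      obtain ⟨J, hJ⟩ := Ideal.dvd_iff_le.mpr hIQ
      have hnormI : p ^ k = p ^ e * Ideal.absNorm J := by rw [← hI, hJ, absNorm_mul, hPn]
      have hek : e ≤ k :=
        (Nat.pow_dvd_pow_iff_le_right hp.one_lt).mp ⟨_, hnormI⟩
      have hJn : Ideal.absNorm J = p ^ (k - e) := by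
        have hsplit : p ^ e * p ^ (k - e) = p ^ e * Ideal.absNorm J := by
          rw [← pow_add, show e + (k - e) = k by omega]; exact hnormI
        exact (Nat.eq_of_mul_eq_mul_left (Nat.pow_pos hp.pos) hsplit).symm
      obtain ⟨m, hm, hJm⟩ := ih (k - e) (by omega) J hJn
      refine ⟨m + 1, ?_, by rw [hJ, hJm, pow_succ]; ring⟩
      have h' : e * (m + 1) = e * m + e := by ring
      omega

lemma class_split {P P' : Ideal (𝓞 K)} {p : ℕ} (hp : p.Prime)
    (hPn : Ideal.absNorm P = p) (hP'n : Ideal.absNorm P' = p)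
    (hcover : ∀ Q : Ideal (𝓞 K), Q.IsPrime → ((p : 𝓞 K) ∈ Q) → Q = P ∨ Q = P') :
    ∀ k, ∀ I : Ideal (𝓞 K), Ideal.absNorm I = p ^ k →
      ∃ t, t ≤ k ∧ I = P ^ t * P' ^ (k - t) := by
  intro k
  induction k with
  | zero =>
    intro I hI
    refine ⟨0, le_refl _, ?_⟩
    simp only [pow_zero, Ideal.one_eq_top, Ideal.mul_top, Nat.zero_sub]
    exact Ideal.absNorm_eq_one_iff.mp (by simpa using hI)
  | succ k ih =>
    intro I hI
    have hItop : I ≠ ⊤ := by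
      intro h
      rw [h, Ideal.absNorm_top] at hI
      have hgt : 1 < p ^ (k + 1) := Nat.one_lt_pow (by omega) hp.one_lt
      omega
    obtain ⟨Q, hQmax, hIQ⟩ := Ideal.exists_le_maximal I hItop
    have hQmem : (p : 𝓞 K) ∈ Q := by
      have hmem : ((p ^ (k + 1) : ℕ) : 𝓞 K) ∈ Q := hIQ (hI ▸ Ideal.absNorm_mem I)
      have hpow : ((p : 𝓞 K)) ^ (k + 1) ∈ Q := by push_cast at hmem; exact hmem
      exact hQmax.isPrime.mem_of_pow_mem _ hpow
    rcases hcover Q hQmax.isPrime hQmem with rfl | rfl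
    · obtain ⟨J, hJ⟩ := Ideal.dvd_iff_le.mpr hIQ
      have hnormI : p ^ (k + 1) = p * Ideal.absNorm J := by rw [← hI, hJ, absNorm_mul, hPn]
      have hJn : Ideal.absNorm J = p ^ k := by
        rw [pow_succ'] at hnormI
        exact (Nat.eq_of_mul_eq_mul_left hp.pos hnormI).symm
      obtain ⟨t, ht, hJm⟩ := ih J hJn
      refine ⟨t + 1, by omega, ?_⟩
      rw [hJ, hJm, show k + 1 - (t + 1) = k - t by omega, pow_succ]
      ring
    · obtain ⟨J, hJ⟩ := Ideal.dvd_iff_le.mpr hIQ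
      have hnormI : p ^ (k + 1) = p * Ideal.absNorm J := by rw [← hI, hJ, absNorm_mul, hP'n]
      have hJn : Ideal.absNorm J = p ^ k := by
        rw [pow_succ'] at hnormI
        exact (Nat.eq_of_mul_eq_mul_left hp.pos hnormI).symm
      obtain ⟨t, ht, hJm⟩ := ih J hJn
      refine ⟨t, by omega, ?_⟩
      rw [hJ, hJm, show k + 1 - t = (k - t) + 1 by omega, pow_succ]
      ring

end BAux

namespace BAux
variable {K : Type} [Field K] [NumberField K] [Polynomial.IsSplittingField ℚ K (X ^ 2 + C 7)]

lemma sigma_invol {σ : K ≃ₐ[ℚ] K} (hσ : σ ≠ AlgEquiv.refl) (x : K) : σ (σ x) = x := by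
  obtain ⟨a, b, rfl⟩ := exists_coords (K := K) x
  simp [map_add, map_mul, map_neg, AlgEquiv.commutes, sigma_rt hσ]

lemma cover_seven {Q : Ideal (𝓞 K)} (hQ : Q.IsPrime) (h7 : (((7 : ℕ) : 𝓞 K)) ∈ Q) :
    Q = Ideal.span {th (K := K)} := by
  have hth2 : (th (K := K)) ^ 2 ∈ Q := by
    rw [th_sq]
    have hneg : -(((7 : ℕ) : 𝓞 K)) ∈ Q := neg_mem h7
    have : -(((7 : ℕ) : 𝓞 K)) = (-7 : 𝓞 K) := by push_cast; ring
    rwa [this] at hneg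
  refine prime_eq_span hQ (hQ.mem_of_pow_mem _ hth2) ?_
  rw [absNorm_span_th]
  norm_num

lemma no_norm_q {q : ℕ} (hq : q.Prime) (hl : legendreSym 7 q = -1) (x : 𝓞 K) :
    Ideal.absNorm (Ideal.span {x}) ≠ q := by
  intro hcon
  have hq7 : q ≠ 7 := by
    rintro rfl
    have h0 : legendreSym 7 ((7 : ℕ) : ℤ) = 0 := by
      rw [legendreSym.eq_zero_iff]
      decide
    rw [h0] at hl
    norm_num at hl
  obtain ⟨s, t, hco, hnorm⟩ := half_coords x
  have hxnorm : Algebra.norm ℤ x = (q : ℤ) := by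
    have h := absNorm_span_eq_norm x
    rw [hcon] at h
    exact h.symm
  rw [hxnorm] at hnorm
  have hc := congrArg (fun z : ℤ => (z : ZMod 7)) hnorm
  push_cast at hc
  have h70 : (7 : ZMod 7) = 0 := by decide
  rw [h70] at hc
  have hz : 4 * ((q : ℕ) : ZMod 7) = ((s : ZMod 7)) ^ 2 := by
    push_cast
    linear_combination hc
  have key : ∀ a sb : ZMod 7, 4 * a = sb ^ 2 → IsSquare a := by decide
  have hsq : IsSquare (((q : ℕ)) : ZMod 7) := key _ _ hz
  have hne0 : (((q : ℕ)) : ZMod 7) ≠ 0 := by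
    rw [Ne, ZMod.natCast_eq_zero_iff]
    intro hdvd
    exact hq7 ((Nat.prime_dvd_prime_iff_eq (by norm_num) hq).mp hdvd).symm
  have hone := (legendreSym.eq_one_iff' (p := 7) hne0).mpr hsq
  rw [hone] at hl
  norm_num at hl

lemma absNorm_span_natCast (q : ℕ) : Ideal.absNorm (Ideal.span {((q : 𝓞 K))}) = q ^ 2 := by
  have hco : (((q : 𝓞 K)) : K) = algebraMap ℚ K (q : ℚ) + algebraMap ℚ K 0 * rt := by
    push_cast
    simp
  have h := norm_int_coords ((q : 𝓞 K)) (q : ℚ) 0 hco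
  have h' : Algebra.norm ℤ ((q : 𝓞 K)) = (q : ℤ) ^ 2 := by
    have : ((((q : ℤ)) ^ 2 : ℤ) : ℚ) = (q : ℚ) ^ 2 + 7 * 0 ^ 2 := by push_cast; ring
    exact_mod_cast h.trans this.symm
  have h2 := absNorm_span_eq_norm ((q : 𝓞 K))
  rw [h'] at h2
  exact_mod_cast h2

lemma cover_inert {q : ℕ} (hq : q.Prime) (hl : legendreSym 7 q = -1)
    (g : Ideal (𝓞 K) → 𝓞 K)
    (hg : ∀ I : Ideal (𝓞 K), I ≠ 0 → I = Ideal.span {g I})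
    {Q : Ideal (𝓞 K)} (hQ : Q.IsPrime) (hmem : ((q : 𝓞 K)) ∈ Q) :
    Q = Ideal.span {((q : 𝓞 K))} := by
  have hq0 : ((q : 𝓞 K)) ≠ 0 := Nat.cast_ne_zero.mpr hq.ne_zero
  have hQne : Q ≠ 0 := by
    intro h
    rw [h] at hmem
    exact hq0 ((Submodule.mem_bot _).mp hmem)
  have hle : Ideal.span {((q : 𝓞 K))} ≤ Q := Ideal.span_le.mpr (by simpa using hmem)
  have hnq : Ideal.absNorm (Ideal.span {((q : 𝓞 K))}) = q ^ 2 := absNorm_span_natCast q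
  have hdvd : Ideal.absNorm Q ∣ q ^ 2 := by
    rw [← hnq]
    exact Ideal.absNorm_dvd_absNorm_of_le hle
  obtain ⟨i, hi, hQn⟩ := (Nat.dvd_prime_pow hq).mp hdvd
  interval_cases i
  · exact absurd (Ideal.absNorm_eq_one_iff.mp (by simpa using hQn)) hQ.ne_top
  · exfalso
    apply no_norm_q hq hl (g Q)
    rw [← hg Q hQne, hQn, pow_one]
  · exact eq_of_le_of_absNorm_eq hle (by rw [hQn, hnq])
      (by rw [hnq]; exact pow_ne_zero 2 hq.ne_zero)

lemma span_q_ne_top {q : ℕ} (hq : q.Prime) : Ideal.span {((q : 𝓞 K))} ≠ ⊤ := by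
  intro h
  have := absNorm_span_natCast (K := K) q
  rw [h, Ideal.absNorm_top] at this
  have := hq.one_lt
  nlinarith

end BAux

namespace BAux
variable {K : Type} [Field K] [NumberField K] [Polynomial.IsSplittingField ℚ K (X ^ 2 + C 7)]

lemma span_th_ne_zero : Ideal.span {th (K := K)} ≠ 0 := by
  rw [Ideal.zero_eq_bot, Ne, Ideal.span_singleton_eq_bot]
  exact th_ne_zero

lemma part_one (g : Ideal (𝓞 K) → 𝓞 K)
    (hg : ∀ I : Ideal (𝓞 K), I ≠ 0 → I = Ideal.span {g I}) (k : ℕ) :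
    b K g (7 ^ k) = (-7 : 𝓞 K) ^ k := by
  have hset : {I : Ideal (𝓞 K) | Ideal.absNorm I = 7 ^ k} =
      ({Ideal.span {th (K := K)} ^ k} : Set (Ideal (𝓞 K))) := by
    ext I
    simp only [Set.mem_setOf_eq, Set.mem_singleton_iff]
    constructor
    · intro hI
      obtain ⟨m, hm, rfl⟩ := class_pow (p := 7) (e := 1) (by norm_num)
        (by rw [pow_one]; exact absNorm_span_th) (by norm_num)
        (fun Q hQ hmem => cover_seven hQ hmem) k I hI
      rw [one_mul] at hm
      rw [hm]
    · rintro rfl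
      rw [absNorm_pow, absNorm_span_th]
  show (∑ᶠ I ∈ {I : Ideal (𝓞 K) | Ideal.absNorm I = 7 ^ k}, (g I) ^ 2) = _
  rw [hset, finsum_mem_singleton]
  have hz : Ideal.span {th (K := K)} ^ k ≠ 0 := pow_ne_zero _ span_th_ne_zero
  have hspan : Ideal.span {th (K := K)} ^ k = Ideal.span {th (K := K) ^ k} :=
    Ideal.span_singleton_pow _ _
  have hsq := gen_sq_eq ((hg _ hz).symm.trans hspan)
  rw [hsq, ← pow_mul, mul_comm k 2, pow_mul, th_sq]

lemma part_three (g : Ideal (𝓞 K) → 𝓞 K)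
    (hg : ∀ I : Ideal (𝓞 K), I ≠ 0 → I = Ideal.span {g I}) (k : ℕ)
    {q : ℕ} (hq : q.Prime) (hl : legendreSym 7 q = -1) :
    (Even k → b K g (q ^ k) = ((q : 𝓞 K)) ^ k) ∧ (Odd k → b K g (q ^ k) = 0) := by
  have hq0 : ((q : 𝓞 K)) ≠ 0 := Nat.cast_ne_zero.mpr hq.ne_zero
  have hprime : (Ideal.span {((q : 𝓞 K))}).IsPrime := by
    obtain ⟨Q, hQmax, hle⟩ := Ideal.exists_le_maximal _ (span_q_ne_top (K := K) hq)
    have := cover_inert hq hl g hg hQmax.isPrime (hle (Ideal.mem_span_singleton_self _))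
    rw [← this]
    exact hQmax.isPrime
  have hclass := class_pow (p := q) (e := 2) hq (absNorm_span_natCast q) (by norm_num)
    (fun Q hQ hmem => cover_inert hq hl g hg hQ hmem)
  constructor
  · intro hk
    obtain ⟨m, hm⟩ := hk
    have hset : {I : Ideal (𝓞 K) | Ideal.absNorm I = q ^ k} =
        ({Ideal.span {((q : 𝓞 K))} ^ m} : Set (Ideal (𝓞 K))) := by
      ext I
      simp only [Set.mem_setOf_eq, Set.mem_singleton_iff]
      constructor
      · intro hI
        obtain ⟨m', hm', rfl⟩ := hclass k I hI
        have : m' = m := by omega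
        rw [this]
      · rintro rfl
        rw [absNorm_pow, absNorm_span_natCast, ← pow_mul]
        congr 1
        omega
    show (∑ᶠ I ∈ {I : Ideal (𝓞 K) | Ideal.absNorm I = q ^ k}, (g I) ^ 2) = _
    rw [hset, finsum_mem_singleton]
    have hz : Ideal.span {((q : 𝓞 K))} ^ m ≠ 0 :=
      pow_ne_zero _ (by rw [Ideal.zero_eq_bot, Ne, Ideal.span_singleton_eq_bot]; exact hq0)
    have hspan : Ideal.span {((q : 𝓞 K))} ^ m = Ideal.span {((q : 𝓞 K)) ^ m} :=
      Ideal.span_singleton_pow _ _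
    have hsq := gen_sq_eq ((hg _ hz).symm.trans hspan)
    rw [hsq, ← pow_mul]
    congr 1
    omega
  · intro hk
    have hset : {I : Ideal (𝓞 K) | Ideal.absNorm I = q ^ k} = (∅ : Set (Ideal (𝓞 K))) := by
      ext I
      simp only [Set.mem_setOf_eq, Set.mem_empty_iff_false, iff_false]
      intro hI
      obtain ⟨m', hm', -⟩ := hclass k I hI
      obtain ⟨m, hm⟩ := hk
      omega
    show (∑ᶠ I ∈ {I : Ideal (𝓞 K) | Ideal.absNorm I = q ^ k}, (g I) ^ 2) = _
    rw [hset, finsum_mem_empty]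

end BAux

namespace BAux
variable {K : Type} [Field K] [NumberField K] [Polynomial.IsSplittingField ℚ K (X ^ 2 + C 7)]

lemma legendre_seven : legendreSym 7 ((7 : ℕ) : ℤ) = 0 := by
  rw [legendreSym.eq_zero_iff]
  decide

set_option maxHeartbeats 2000000 in
lemma part_two (g : Ideal (𝓞 K) → 𝓞 K)
    (hg : ∀ I : Ideal (𝓞 K), I ≠ 0 → I = Ideal.span {g I}) (k : ℕ)
    {p : ℕ} (hp : p.Prime) (hl : legendreSym 7 p = 1)
    {σ : K ≃ₐ[ℚ] K} (hσ : σ ≠ AlgEquiv.refl)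
    (π πbar : 𝓞 K)
    (hσπ : σ (algebraMap (𝓞 K) K π) = algebraMap (𝓞 K) K πbar)
    (hmul : (p : 𝓞 K) = π * πbar) :
    b K g (p ^ k) = ∑ t ∈ Finset.range (k + 1), π ^ (2 * t) * πbar ^ (2 * (k - t)) := by
  classical
  have hcoe : ∀ x : 𝓞 K, (x : K) = algebraMap (𝓞 K) K x := fun _ => rfl
  have hσπ' : σ ((π : 𝓞 K) : K) = ((πbar : 𝓞 K) : K) := hσπ
  have hσπb : σ ((πbar : 𝓞 K) : K) = ((π : 𝓞 K) : K) := by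
    rw [← hσπ', sigma_invol hσ]
  have hmulK : ((π : 𝓞 K) : K) * ((πbar : 𝓞 K) : K) = algebraMap ℚ K ((p : ℕ) : ℚ) := by
    have hc := congrArg (fun x : 𝓞 K => (x : K)) hmul
    push_cast at hc
    rw [← hc]
    rw [map_natCast]
  -- norms
  have hnπ : Algebra.norm ℤ π = ((p : ℕ) : ℤ) := by
    have h1 := norm_eq_mul_sigma hσ ((π : 𝓞 K) : K)
    rw [hσπ', hmulK] at h1
    have h2 : Algebra.norm ℚ ((π : 𝓞 K) : K) = ((p : ℕ) : ℚ) :=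
      (algebraMap ℚ K).injective h1
    have h3 := Algebra.coe_norm_int π
    rw [h2] at h3
    exact_mod_cast h3
  have hnπbar : Algebra.norm ℤ πbar = ((p : ℕ) : ℤ) := by
    have h1 := norm_eq_mul_sigma hσ ((πbar : 𝓞 K) : K)
    rw [hσπb] at h1
    rw [mul_comm] at h1
    rw [hmulK] at h1
    have h2 : Algebra.norm ℚ ((πbar : 𝓞 K) : K) = ((p : ℕ) : ℚ) :=
      (algebraMap ℚ K).injective h1
    have h3 := Algebra.coe_norm_int πbar
    rw [h2] at h3
    exact_mod_cast h3
  have habsπ : Ideal.absNorm (Ideal.span {π}) = p := by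
    have := absNorm_span_eq_norm π
    rw [hnπ] at this
    exact_mod_cast this
  have habsπbar : Ideal.absNorm (Ideal.span {πbar}) = p := by
    have := absNorm_span_eq_norm πbar
    rw [hnπbar] at this
    exact_mod_cast this
  have hPprime : (Ideal.span {π} : Ideal (𝓞 K)).IsPrime :=
    Ideal.isPrime_of_irreducible_absNorm
      (by rw [habsπ]; exact (Nat.irreducible_iff_nat_prime _).mpr hp)
  have hP'prime : (Ideal.span {πbar} : Ideal (𝓞 K)).IsPrime :=
    Ideal.isPrime_of_irreducible_absNorm
      (by rw [habsπbar]; exact (Nat.irreducible_iff_nat_prime _).mpr hp)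
  have hp0 : ((p : 𝓞 K)) ≠ 0 := Nat.cast_ne_zero.mpr hp.ne_zero
  have hππ0 : π * πbar ≠ 0 := hmul ▸ hp0
  have hπ0 : π ≠ 0 := left_ne_zero_of_mul hππ0
  have hπbar0 : πbar ≠ 0 := right_ne_zero_of_mul hππ0
  have hPz : (Ideal.span {π} : Ideal (𝓞 K)) ≠ 0 := by
    rw [Ideal.zero_eq_bot, Ne, Ideal.span_singleton_eq_bot]; exact hπ0
  have hP'z : (Ideal.span {πbar} : Ideal (𝓞 K)) ≠ 0 := by
    rw [Ideal.zero_eq_bot, Ne, Ideal.span_singleton_eq_bot]; exact hπbar0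
  -- distinctness
  obtain ⟨s, t, hco, hnorm⟩ := half_coords π
  rw [hnπ] at hnorm
  have hσco : σ ((π : 𝓞 K) : K) =
      algebraMap ℚ K ((s : ℚ)/2) + algebraMap ℚ K (-((t : ℚ)/2)) * rt := by
    rw [hco, map_add, map_mul, AlgEquiv.commutes, AlgEquiv.commutes, sigma_rt hσ, map_neg]
    ring
  have hne : (Ideal.span {π} : Ideal (𝓞 K)) ≠ Ideal.span {πbar} := by
    intro heq
    obtain ⟨u, hu⟩ := Ideal.span_singleton_eq_span_singleton.mp heq
    rcases unit_pm u with h1 | h1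
    · -- πbar = π
      have hππb : πbar = π := by rw [← hu, h1, mul_one]
      have heqK : σ ((π : 𝓞 K) : K) = ((π : 𝓞 K) : K) := by rw [hσπ', hππb]
      rw [hσco, hco] at heqK
      have ht0 : t = 0 := by
        have := (coords_unique heqK).2
        have ht' : -((t : ℚ)/2) = (t : ℚ)/2 := this
        have : (t : ℚ) = 0 := by linarith
        exact_mod_cast this
      rw [ht0] at hnorm
      have hs4 : 4 * ((p : ℕ) : ℤ) = s ^ 2 := by linarith [hnorm]
      have h2s : (2 : ℤ) ∣ s := by
        have h2s2 : (2 : ℤ) ∣ s ^ 2 := ⟨2 * ((p : ℕ) : ℤ), by linarith⟩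
        exact Int.Prime.dvd_pow' (by norm_num) h2s2
      obtain ⟨c, rfl⟩ := h2s
      have hpc : ((p : ℕ) : ℤ) = c ^ 2 := by nlinarith [hs4]
      have hnat : p = c.natAbs ^ 2 := by
        have := congrArg Int.natAbs hpc
        simpa [Int.natAbs_pow] using this
      rcases hp.eq_one_or_self_of_dvd c.natAbs ⟨c.natAbs, by rw [hnat]; ring⟩ with h | h
      · rw [h] at hnat
        simp at hnat
        exact absurd hnat (by have := hp.one_lt; omega)
      · rw [h] at hnat
        have := hp.two_le
        nlinarith [hnat]
    · -- πbar = -π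
      have hππb : πbar = -π := by rw [← hu, h1]; ring
      have heqK : σ ((π : 𝓞 K) : K) = -(((π : 𝓞 K)) : K) := by
        rw [hσπ', hππb]; push_cast; ring
      have heqK2 : algebraMap ℚ K ((s : ℚ)/2) + algebraMap ℚ K (-((t : ℚ)/2)) * rt =
          algebraMap ℚ K (-((s : ℚ)/2)) + algebraMap ℚ K (-((t : ℚ)/2)) * rt := by
        rw [← hσco, heqK, hco, map_neg, map_neg]
        ring
      have hs0 : s = 0 := by
        have := (coords_unique heqK2).1
        have : (s : ℚ) = 0 := by linarith [this]
        exact_mod_cast this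
      rw [hs0] at hnorm
      have h7p : (7 : ℤ) ∣ 4 * ((p : ℕ) : ℤ) := ⟨t ^ 2, by linarith [hnorm]⟩
      have hp7 : Prime (7 : ℤ) := by norm_num
      rcases (hp7.dvd_mul).mp h7p with h | h
      · norm_num at h
      · have h7pn : (7 : ℕ) ∣ p := by exact_mod_cast h
        have hp7' : p = 7 := ((Nat.prime_dvd_prime_iff_eq (by norm_num) hp).mp h7pn).symm
        rw [hp7'] at hl
        rw [legendre_seven] at hl
        norm_num at hl
  -- cover
  have hcover : ∀ Q : Ideal (𝓞 K), Q.IsPrime → ((p : 𝓞 K)) ∈ Q →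
      Q = Ideal.span {π} ∨ Q = Ideal.span {πbar} := by
    intro Q hQ hm
    rw [hmul] at hm
    rcases hQ.mem_or_mem hm with h | h
    · exact Or.inl (prime_eq_span hQ h (by rw [habsπ]; exact hp))
    · exact Or.inr (prime_eq_span hQ h (by rw [habsπbar]; exact hp))
  -- the set
  have hset : {I : Ideal (𝓞 K) | Ideal.absNorm I = p ^ k} =
      ↑((Finset.range (k + 1)).image
        (fun t => Ideal.span {π} ^ t * Ideal.span {πbar} ^ (k - t))) := by
    ext I
    simp only [Set.mem_setOf_eq, Finset.coe_image, Set.mem_image, Finset.mem_coe,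
      Finset.mem_range]
    constructor
    · intro hI
      obtain ⟨t', ht', rfl⟩ := class_split hp habsπ habsπbar hcover k I hI
      exact ⟨t', by omega, rfl⟩
    · rintro ⟨t', ht', rfl⟩
      rw [absNorm_mul, absNorm_pow, absNorm_pow, habsπ, habsπbar, ← pow_add]
      congr 1
      omega
  -- injectivity
  have hkey : ∀ t' s' : ℕ, t' ≤ k → s' ≤ k → t' < s' →
      Ideal.span {π} ^ t' * Ideal.span {πbar} ^ (k - t') ≠
        Ideal.span {π} ^ s' * Ideal.span {πbar} ^ (k - s') := by
    intro t' s' ht hs hts heq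
    have ha : Ideal.span {π} ^ t' * Ideal.span {πbar} ^ (k - s') ≠ (0 : Ideal (𝓞 K)) :=
      mul_ne_zero (pow_ne_zero _ hPz) (pow_ne_zero _ hP'z)
    have e1 : (k - s') + (s' - t') = k - t' := by omega
    have e2 : t' + (s' - t') = s' := by omega
    have hL : (Ideal.span {π} ^ t' * Ideal.span {πbar} ^ (k - s')) * Ideal.span {πbar} ^ (s' - t')
        = Ideal.span {π} ^ t' * Ideal.span {πbar} ^ (k - t') := by
      rw [mul_assoc, ← pow_add, e1]
    have hR : (Ideal.span {π} ^ t' * Ideal.span {πbar} ^ (k - s')) * Ideal.span {π} ^ (s' - t')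
        = Ideal.span {π} ^ s' * Ideal.span {πbar} ^ (k - s') := by
      rw [mul_right_comm, ← pow_add, e2]
    have h1 : (Ideal.span {π} ^ t' * Ideal.span {πbar} ^ (k - s')) * Ideal.span {πbar} ^ (s' - t')
        = (Ideal.span {π} ^ t' * Ideal.span {πbar} ^ (k - s')) * Ideal.span {π} ^ (s' - t') :=
      hL.trans (heq.trans hR.symm)
    have h2 := mul_left_cancel₀ ha h1
    have hPprime' : Prime (Ideal.span {π} : Ideal (𝓞 K)) :=
      Ideal.prime_of_isPrime (by rwa [Ideal.zero_eq_bot] at hPz) hPprime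
    have hdvd : Ideal.span {π} ∣ (Ideal.span {πbar} : Ideal (𝓞 K)) ^ (s' - t') := by
      rw [h2]
      exact dvd_pow_self _ (by omega)
    have hle' : (Ideal.span {πbar} : Ideal (𝓞 K)) ≤ Ideal.span {π} :=
      Ideal.le_of_dvd (hPprime'.dvd_of_dvd_pow hdvd)
    have hmax' : (Ideal.span {πbar} : Ideal (𝓞 K)).IsMaximal :=
      hP'prime.isMaximal (by rwa [Ideal.zero_eq_bot] at hP'z)
    exact hne (hmax'.eq_of_le hPprime.ne_top hle').symm
  have hinj : ∀ t' ∈ Finset.range (k + 1), ∀ s' ∈ Finset.range (k + 1),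
      (fun t => Ideal.span {π} ^ t * Ideal.span {πbar} ^ (k - t)) t' =
        (fun t => Ideal.span {π} ^ t * Ideal.span {πbar} ^ (k - t)) s' → t' = s' := by
    intro t' ht' s' hs' heq
    simp only [Finset.mem_range] at ht' hs'
    by_contra hne'
    rcases Nat.lt_or_ge t' s' with h | h
    · exact hkey t' s' (by omega) (by omega) h heq
    · exact hkey s' t' (by omega) (by omega) (by omega) heq.symm
  -- conclude
  show (∑ᶠ I ∈ {I : Ideal (𝓞 K) | Ideal.absNorm I = p ^ k}, (g I) ^ 2) = _
  rw [hset, finsum_mem_coe_finset, Finset.sum_image hinj]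
  apply Finset.sum_congr rfl
  intro t' ht'
  have hIz : Ideal.span {π} ^ t' * Ideal.span {πbar} ^ (k - t') ≠ (0 : Ideal (𝓞 K)) :=
    mul_ne_zero (pow_ne_zero _ hPz) (pow_ne_zero _ hP'z)
  have hIsp : Ideal.span {π} ^ t' * Ideal.span {πbar} ^ (k - t') =
      Ideal.span {π ^ t' * πbar ^ (k - t')} := by
    rw [Ideal.span_singleton_pow, Ideal.span_singleton_pow,
      Ideal.span_singleton_mul_span_singleton]
  have hsq := gen_sq_eq ((hg _ hIz).symm.trans hIsp)
  rw [hsq, mul_pow, ← pow_mul, ← pow_mul, mul_comm t' 2, mul_comm (k - t') 2]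

end BAux

/-- Values of `b` at prime powers: (i) `b(7^k) = (−7)^k`;
(ii) if `ε(p) = 1` and `p = π·π̄` with `π̄` the image of `π` under the nontrivial
`ℚ`-automorphism of `K`, then `b(p^k) = ∑_{t=0}^k π^{2t}·π̄^{2(k−t)}`;
(iii) if `ε(q) = −1` then `b(q^k) = q^k` for even `k` and `b(q^k) = 0` for odd `k`. -/
theorem b_prime_pow (g : Ideal (RingOfIntegers K) → RingOfIntegers K)
    (hg : ∀ I : Ideal (RingOfIntegers K), I ≠ 0 → I = Ideal.span {g I})
    (k : ℕ) (hk : 1 ≤ k) :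
    b K g (7 ^ k) = (-7 : RingOfIntegers K) ^ k ∧
    (∀ p : ℕ, p.Prime → legendreSym 7 p = 1 →
      ∀ (σ : K ≃ₐ[ℚ] K), σ ≠ AlgEquiv.refl →
      ∀ π πbar : RingOfIntegers K,
        σ (algebraMap (RingOfIntegers K) K π) = algebraMap (RingOfIntegers K) K πbar →
        (p : RingOfIntegers K) = π * πbar →
        b K g (p ^ k) = ∑ t ∈ Finset.range (k + 1), π ^ (2 * t) * πbar ^ (2 * (k - t))) ∧
    (∀ q : ℕ, q.Prime → legendreSym 7 q = -1 →
      (Even k → b K g (q ^ k) = (q : RingOfIntegers K) ^ k) ∧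
      (Odd k → b K g (q ^ k) = 0)) := by
  exact ⟨BAux.part_one g hg k,
    fun p hp hl σ hσ π πbar hσπ hmul => BAux.part_two g hg k hp hl hσ π πbar hσπ hmul,
    fun q hq hl => BAux.part_three g hg k hq hl⟩
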